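/- Let m, N ≥ 1, α ∈ [0,2π), ω = e^{iα}, k ∈ {0,1,…,N−1}, and set α_k = (kπ + α/2)/N. Let a₀ ∈ ℝ^m and define x, y : ℤ → ℂ^m by x_n = i·e^{i(2n−1)α_k}·a₀ and y_n = e^{2inα_k}·a₀. Then x_{n+N} = ω x_n and y_{n+N} = ω y_n for all n ∈ ℤ, and for all n ∈ ℤ one has y_n − y_{n+1} = −2 sin(α_k)·x_{n+1} and x_{n+1} − x_n = −2 sin(α_k)·y_n; equivalently, J(z_{n+1} − z_n) = −2 sin(α_k)·z̃_n where z_n = (x_n, y_n) and z̃_n = (x_{n+1}, y_n). -/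

import Mathlib

open Matrix

/-- The standard symplectic matrix `J = [[0, -I_m],[I_m, 0]]` in `m × m` blocks. -/
def Jm (m : ℕ) : Matrix (Fin m ⊕ Fin m) (Fin m ⊕ Fin m) ℂ :=
  Matrix.fromBlocks 0 (-1) 1 0

/-- the sequences `x_n = i e^{i(2n−1)α_k} a₀`, `y_n = e^{2inα_k} a₀`
satisfy the boundary condition `z_{n+N} = ω z_n` and the eigenvalue equations for the
eigenvalue `−2 sin(α_k)`. -/
theorem stmt7 (m N : ℕ) (hm : 1 ≤ m) (hN : 1 ≤ N)
    (α : ℝ) (hα : α ∈ Set.Ico (0 : ℝ) (2 * Real.pi))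
    (ω : ℂ) (hωα : ω = Complex.exp (Complex.I * α))
    (k : ℕ) (hk : k < N)
    (αk : ℝ) (hαk : αk = ((k : ℝ) * Real.pi + α / 2) / N)
    (a₀ : Fin m → ℝ) (x y : ℤ → Fin m → ℂ)
    (hx : ∀ (n : ℤ) (i : Fin m),
      x n i = Complex.I * Complex.exp (Complex.I * ((2 * (n : ℂ) - 1) * (αk : ℂ))) * (a₀ i : ℂ))
    (hy : ∀ (n : ℤ) (i : Fin m),
      y n i = Complex.exp (Complex.I * (2 * (n : ℂ) * (αk : ℂ))) * (a₀ i : ℂ)) :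
    (∀ n : ℤ, x (n + (N : ℤ)) = ω • x n ∧ y (n + (N : ℤ)) = ω • y n) ∧
    (∀ n : ℤ, y n - y (n + 1) = ((-(2 * Real.sin αk) : ℝ) : ℂ) • x (n + 1) ∧
      x (n + 1) - x n = ((-(2 * Real.sin αk) : ℝ) : ℂ) • y n) ∧
    (∀ n : ℤ, (Jm m).mulVec (Sum.elim (x (n + 1)) (y (n + 1)) - Sum.elim (x n) (y n)) =
      ((-(2 * Real.sin αk) : ℝ) : ℂ) • Sum.elim (x (n + 1)) (y n)) := by
  have hNR : (N : ℝ) ≠ 0 := by positivity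
  have hNC : (N : ℂ) ≠ 0 := by exact_mod_cast Nat.cast_ne_zero.mpr (by omega)
  have hNαk : (N : ℂ) * (αk : ℂ) = (k : ℂ) * (Real.pi : ℂ) + (α : ℂ) / 2 := by
    rw [hαk]; push_cast; field_simp
  have hω : Complex.exp (Complex.I * (2 * (N : ℂ) * (αk : ℂ))) = ω := by
    have h2 : Complex.I * (2 * (N : ℂ) * (αk : ℂ)) =
        Complex.I * (α : ℂ) + (k : ℤ) * (2 * (Real.pi : ℂ) * Complex.I) := by
      have : (2 : ℂ) * ((N : ℂ) * (αk : ℂ)) =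
          2 * ((k : ℂ) * (Real.pi : ℂ) + (α : ℂ) / 2) := by rw [hNαk]
      push_cast at this ⊢
      linear_combination Complex.I * this
    rw [h2, Complex.exp_add, Complex.exp_int_mul_two_pi_mul_I, mul_one, hωα]
  have hE : Complex.exp (Complex.I * (αk : ℂ)) ≠ 0 := Complex.exp_ne_zero _
  have hneg : Complex.exp (-(αk : ℂ) * Complex.I) =
      (Complex.exp (Complex.I * (αk : ℂ)))⁻¹ := by
    rw [← Complex.exp_neg]; ring_nf
  have hcomm : Complex.exp ((αk : ℂ) * Complex.I) = Complex.exp (Complex.I * (αk : ℂ)) := by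
    ring_nf
  have hsin : Complex.sin (αk : ℂ) * (2 * Complex.I) * Complex.exp (Complex.I * (αk : ℂ))
      = Complex.exp (Complex.I * (αk : ℂ)) * Complex.exp (Complex.I * (αk : ℂ)) - 1 := by
    rw [Complex.sin, hneg, hcomm]
    field_simp
    linear_combination (1 - Complex.exp (Complex.I * (αk : ℂ)) ^ 2) * Complex.I_sq
  have h2 : Complex.sin (αk : ℂ) * (2 * Complex.I) =
      Complex.exp (Complex.I * (αk : ℂ)) - (Complex.exp (Complex.I * (αk : ℂ)))⁻¹ := by
    rw [Complex.sin, hneg, hcomm]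
    field_simp
    linear_combination (1 - Complex.exp (Complex.I * (αk : ℂ)) ^ 2) * Complex.I_sq
  -- key pointwise identities
  have key1 : ∀ n : ℤ, y n - y (n + 1) = ((-(2 * Real.sin αk) : ℝ) : ℂ) • x (n + 1) := by
    intro n
    funext i
    simp only [Pi.sub_apply, Pi.smul_apply, smul_eq_mul, hx, hy]
    have e1 : Complex.I * (2 * ((n : ℂ) + 1) * (αk : ℂ)) =
        Complex.I * (2 * (n : ℂ) * (αk : ℂ)) +
          (Complex.I * (αk : ℂ) + Complex.I * (αk : ℂ)) := by ring
    have e2 : Complex.I * ((2 * ((n : ℂ) + 1) - 1) * (αk : ℂ)) =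
        Complex.I * (2 * (n : ℂ) * (αk : ℂ)) + Complex.I * (αk : ℂ) := by ring
    push_cast
    rw [e1, e2, Complex.exp_add, Complex.exp_add, Complex.exp_add]
    push_cast
    linear_combination (Complex.exp (Complex.I * (2 * (n : ℂ) * (αk : ℂ))) * (a₀ i : ℂ)) * hsin
  have key2 : ∀ n : ℤ, x (n + 1) - x n = ((-(2 * Real.sin αk) : ℝ) : ℂ) • y n := by
    intro n
    funext i
    simp only [Pi.sub_apply, Pi.smul_apply, smul_eq_mul, hx, hy]
    have e2 : Complex.I * ((2 * ((n : ℂ) + 1) - 1) * (αk : ℂ)) =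
        Complex.I * (2 * (n : ℂ) * (αk : ℂ)) + Complex.I * (αk : ℂ) := by ring
    have e3 : Complex.I * ((2 * (n : ℂ) - 1) * (αk : ℂ)) =
        Complex.I * (2 * (n : ℂ) * (αk : ℂ)) + -(Complex.I * (αk : ℂ)) := by ring
    have hneg2 : Complex.exp (-(Complex.I * (αk : ℂ))) =
        (Complex.exp (Complex.I * (αk : ℂ)))⁻¹ := Complex.exp_neg _
    push_cast
    rw [e2, e3, Complex.exp_add, Complex.exp_add, hneg2]
    push_cast
    linear_combination
      (-(Complex.I * Complex.exp (Complex.I * (2 * (n : ℂ) * (αk : ℂ))) * (a₀ i : ℂ))) * h2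
      + (2 * Complex.sin (αk : ℂ) * Complex.exp (Complex.I * (2 * (n : ℂ) * (αk : ℂ)))
          * (a₀ i : ℂ)) * Complex.I_sq
  refine ⟨?_, fun n => ⟨key1 n, key2 n⟩, ?_⟩
  · intro n
    constructor
    · funext i
      simp only [Pi.smul_apply, smul_eq_mul, hx]
      have e : Complex.I * ((2 * (((n : ℂ) + (N : ℂ))) - 1) * (αk : ℂ)) =
          Complex.I * (2 * (N : ℂ) * (αk : ℂ)) +
            Complex.I * ((2 * (n : ℂ) - 1) * (αk : ℂ)) := by ring
      push_cast
      rw [e, Complex.exp_add, hω]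
      ring
    · funext i
      simp only [Pi.smul_apply, smul_eq_mul, hy]
      have e : Complex.I * (2 * (((n : ℂ) + (N : ℂ))) * (αk : ℂ)) =
          Complex.I * (2 * (N : ℂ) * (αk : ℂ)) +
            Complex.I * (2 * (n : ℂ) * (αk : ℂ)) := by ring
      push_cast
      rw [e, Complex.exp_add, hω]
      ring
  · intro n
    funext i
    have h := fromBlocks_mulVec (0 : Matrix (Fin m) (Fin m) ℂ)
      (-1 : Matrix (Fin m) (Fin m) ℂ) (1 : Matrix (Fin m) (Fin m) ℂ)
      (0 : Matrix (Fin m) (Fin m) ℂ)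
      (Sum.elim (x (n + 1)) (y (n + 1)) - Sum.elim (x n) (y n))
    rw [Jm, h]
    have hk1 := congrFun (key1 n) -- componentwise
    have hk2 := congrFun (key2 n)
    cases i with
    | inl j =>
      simp only [Sum.elim_inl, Pi.add_apply, Matrix.zero_mulVec, Matrix.neg_mulVec,
        Matrix.one_mulVec, Pi.zero_apply, Pi.neg_apply, zero_add, Function.comp,
        Pi.sub_apply, Sum.elim_inr, Pi.smul_apply, smul_eq_mul]
      have := hk1 j
      simp only [Pi.sub_apply, Pi.smul_apply, smul_eq_mul] at this
      linear_combination this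
    | inr j =>
      simp only [Sum.elim_inr, Pi.add_apply, Matrix.zero_mulVec, Matrix.neg_mulVec,
        Matrix.one_mulVec, Pi.zero_apply, Pi.neg_apply, add_zero, Function.comp,
        Pi.sub_apply, Sum.elim_inl, Pi.smul_apply, smul_eq_mul]
      have := hk2 j
      simp only [Pi.sub_apply, Pi.smul_apply, smul_eq_mul] at this
      linear_combination this
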